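/- arXiv:1808.08408 — 3 statements merged into one kernel-verified Lean document; each statement's English description precedes it below -/
import Mathlib

section
/- Rational approximation at the origin (from the proof of Lemma 4.1). Let r : ℝ → ℂ be a Schwartz-class function satisfying r(k) = −conj(r(−k)) for all k ∈ ℝ, and let N ≥ 1 be an integer. Then there exist real numbers {a_j, b_j}_{j=0}^{2N+1} such that the rational function r₀(k) := (k²+1)^{−(3N+4)} Σ_{j=0}^{2N+1} (a_j k + i b_j) k^{2j}, which is analytic on ℂ \ {i, −i}, satisfies r₀(k) = −conj(r₀(−conj(k))) for all k ∈ ℂ \ {i, −i}, and the function f := r − r₀ on ℝ satisfies, for some constant C > 0 and every n = 0, 1, …, N+1: |f^{(n)}(k)| ≤ C |k|^{4N+4−n} for all real k with |k| ≤ 1, and |f^{(n)}(k)| ≤ C |k|^{−2N−5} for all real k with |k| ≥ 1. -/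
open Set
open Complex Polynomial
open scoped ContDiff

lemma iteratedDeriv_conj (f : ℝ → ℂ) (n : ℕ) (x : ℝ) :
    iteratedDeriv n (fun t => (starRingEnd ℂ) (f t)) x
      = (starRingEnd ℂ) (iteratedDeriv n f x) := by
  have h := Complex.conjCLE.iteratedFDerivWithin_comp_left f uniqueDiffOn_univ
      (Set.mem_univ x) n
  rw [iteratedDeriv_eq_iteratedFDeriv, iteratedDeriv_eq_iteratedFDeriv,
    ← iteratedFDerivWithin_univ, ← iteratedFDerivWithin_univ]
  have : (fun t => (starRingEnd ℂ) (f t)) = (Complex.conjCLE ∘ f) := rfl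
  rw [this, h]
  rfl

lemma parity_lemma (w : ℝ → ℂ) (hw : ∀ x, w x = -(starRingEnd ℂ) (w (-x))) (m : ℕ) :
    iteratedDeriv m w 0 = -((-1:ℝ)^m • (starRingEnd ℂ) (iteratedDeriv m w 0)) := by
  conv_lhs => rw [show w = fun x => -((starRingEnd ℂ) (w (-x))) from funext hw]
  rw [iteratedDeriv_fun_neg]
  congr 1
  have h2 := iteratedDeriv_comp_neg m (fun t : ℝ => (starRingEnd ℂ) (w t)) (0:ℝ)
  rw [neg_zero] at h2
  rw [h2, iteratedDeriv_conj]

lemma sum_pair (c : ℕ → ℂ) (J : ℕ) (z : ℂ) :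
    ∑ m ∈ Finset.range (2*J), c m * z^m
      = ∑ j ∈ Finset.range J, (c (2*j+1) * z + c (2*j)) * z^(2*j) := by
  induction J with
  | zero => simp
  | succ J ih =>
    rw [Finset.sum_range_succ, ← ih, show 2*(J+1) = (2*J)+1+1 by ring,
      Finset.sum_range_succ, Finset.sum_range_succ]
    ring

lemma my_iteratedDeriv_add {n : ℕ} {f g : ℝ → ℂ} (hf : ContDiff ℝ ∞ f) (hg : ContDiff ℝ ∞ g)
    (x : ℝ) :
    iteratedDeriv n (fun t => f t + g t) x = iteratedDeriv n f x + iteratedDeriv n g x := by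
  simp only [iteratedDeriv_eq_iteratedFDeriv]
  rw [iteratedFDeriv_add_apply' (hf.contDiffAt.of_le (by exact_mod_cast le_top))
    (hg.contDiffAt.of_le (by exact_mod_cast le_top))]
  rfl

lemma my_iteratedDeriv_sub {n : ℕ} {f g : ℝ → ℂ} (hf : ContDiff ℝ ∞ f) (hg : ContDiff ℝ ∞ g)
    (x : ℝ) :
    iteratedDeriv n (fun t => f t - g t) x = iteratedDeriv n f x - iteratedDeriv n g x := by
  have : (fun t => f t - g t) = fun t => f t + (-g t) := by funext t; ring
  rw [this, my_iteratedDeriv_add hf hg.neg, iteratedDeriv_fun_neg]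
  ring

lemma vanish_mul (m : ℕ) : ∀ (h v : ℝ → ℂ), ContDiff ℝ ∞ h → ContDiff ℝ ∞ v →
    (∀ j ≤ m, iteratedDeriv j h 0 = 0) →
    iteratedDeriv m (fun x => h x * v x) 0 = 0 := by
  induction m with
  | zero =>
    intro h v _ _ hz
    rw [iteratedDeriv_zero]
    have := hz 0 le_rfl
    rw [iteratedDeriv_zero] at this
    simp [this]
  | succ m ih =>
    intro h v hh hv hz
    rw [iteratedDeriv_succ']
    have hd : (deriv fun x => h x * v x)
        = fun x => deriv h x * v x + h x * deriv v x := by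
      funext x
      exact deriv_fun_mul (hh.differentiable (by simp) x)
        (hv.differentiable (by simp) x)
    rw [hd]
    have ch : ContDiff ℝ ∞ (deriv h) := (contDiff_infty_iff_deriv.mp hh).2
    have cv : ContDiff ℝ ∞ (deriv v) := (contDiff_infty_iff_deriv.mp hv).2
    rw [my_iteratedDeriv_add (ch.mul hv) (hh.mul cv)]
    have z1 : iteratedDeriv m (fun x => deriv h x * v x) 0 = 0 := by
      refine ih (deriv h) v ch hv (fun j hj => ?_)
      have := hz (j+1) (by omega)
      rwa [iteratedDeriv_succ'] at this
    have z2 : iteratedDeriv m (fun x => h x * deriv v x) 0 = 0 :=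
      ih h (deriv v) hh cv (fun j hj => hz j (by omega))
    rw [z1, z2, add_zero]

lemma contDiff_iteratedDeriv {f : ℝ → ℂ} (hf : ContDiff ℝ ∞ f) (n : ℕ) :
    ContDiff ℝ ∞ (iteratedDeriv n f) := by
  rw [iteratedDeriv_eq_iterate]; exact hf.iterate_deriv n

lemma near_zero_bound {f : ℝ → ℂ} (hf : ContDiff ℝ ∞ f) (D : ℕ)
    (hz : ∀ m ≤ D, iteratedDeriv m f 0 = 0) {M₀ : ℝ}
    (hM : ∀ k : ℝ, |k| ≤ 1 → ‖iteratedDeriv (D+1) f k‖ ≤ M₀) :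
    ∀ i, i ≤ D + 1 → ∀ k : ℝ, |k| ≤ 1 → ‖iteratedDeriv (D+1-i) f k‖ ≤ M₀ * |k| ^ i := by
  intro i
  induction i with
  | zero => intro _ k hk; simpa using hM k hk
  | succ i ih =>
    intro hi k hk
    have hiD : i ≤ D := by omega
    have e1 : D + 1 - (i+1) = D - i := by omega
    have e2 : D - i + 1 = D + 1 - i := by omega
    set g := iteratedDeriv (D - i) f with hg
    have hg0 : g 0 = 0 := hz (D - i) (by omega)
    have hM0 : 0 ≤ M₀ := le_trans (norm_nonneg _) (hM 0 (by simp))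
    have key : ‖g k - g 0‖ ≤ (M₀ * |k| ^ i) * ‖k - 0‖ := by
      refine Convex.norm_image_sub_le_of_norm_deriv_le
        (fun t _ => ((contDiff_iteratedDeriv hf _).differentiable
          (by simp)) t) ?_ (convex_uIcc 0 k) ?_ ?_
      · intro t ht
        have htk : |t| ≤ |k| := by
          rcases Set.mem_uIcc.mp ht with ⟨h1, h2⟩ | ⟨h1, h2⟩ <;> rw [abs_le] <;>
            constructor <;> cases abs_le.mp (le_refl |k|) <;> nlinarith [abs_nonneg k,
              le_abs_self k, neg_abs_le k]
        have ht1 : |t| ≤ 1 := le_trans htk hk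
        have := ih (by omega) t ht1
        have hdg : deriv g t = iteratedDeriv (D+1-i) f t := by
          rw [hg, ← iteratedDeriv_succ, e2]
        rw [hdg]
        calc ‖iteratedDeriv (D+1-i) f t‖ ≤ M₀ * |t| ^ i := this
          _ ≤ M₀ * |k| ^ i := by
              gcongr
      · exact Set.left_mem_uIcc
      · exact Set.right_mem_uIcc
    rw [hg0, sub_zero] at key
    rw [e1]
    calc ‖g k‖ ≤ (M₀ * |k| ^ i) * ‖k - 0‖ := key
      _ = M₀ * |k| ^ (i+1) := by
          rw [sub_zero, Real.norm_eq_abs]; ring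

noncomputable def ratSeq (M : ℕ) (Q : ℂ[X]) : ℕ → ℂ[X]
  | 0 => Q
  | n+1 => derivative (ratSeq M Q n) * (X^2+1) - C ((2*(M+n) : ℕ) : ℂ) * X * ratSeq M Q n

lemma hasDerivAt_rat (p : ℂ[X]) (m : ℕ) (hm : 1 ≤ m) (z : ℂ) (hz : z^2+1 ≠ 0) :
    HasDerivAt (fun w => p.eval w / (w^2+1)^m)
      ((derivative p * (X^2+1) - C ((2*m : ℕ) : ℂ) * X * p).eval z / (z^2+1)^(m+1)) z := by
  obtain ⟨m', rfl⟩ : ∃ m', m = m' + 1 := ⟨m - 1, by omega⟩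
  have hden : HasDerivAt (fun w : ℂ => (w^2+1)^(m'+1))
      ((m'+1 : ℕ) * (z^2+1)^m' * (2*z)) z := by
    have h1 : HasDerivAt (fun w : ℂ => w^2+1) (2*z) z := by
      simpa using ((hasDerivAt_pow 2 z).add_const 1)
    simpa using h1.fun_pow (m'+1)
  have hnum : HasDerivAt (fun w : ℂ => p.eval w) (p.derivative.eval z) z := p.hasDerivAt z
  have hdz : (z^2+1)^(m'+1) ≠ 0 := pow_ne_zero _ hz
  have := hnum.fun_div hden hdz
  refine this.congr_deriv ?_
  simp only [eval_sub, eval_mul, eval_add, eval_pow, eval_X, eval_one, eval_C]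
  push_cast
  field_simp
  ring

lemma real_denom_ne (x : ℝ) : ((x:ℂ)^2+1) ≠ 0 := by
  have : ((x:ℂ)^2+1) = ((x^2+1 : ℝ) : ℂ) := by push_cast; ring
  rw [this]
  exact_mod_cast ne_of_gt (by positivity : (0:ℝ) < x^2+1)

lemma iteratedDeriv_rat (M : ℕ) (hM : 1 ≤ M) (Q : ℂ[X]) (n : ℕ) (x : ℝ) :
    iteratedDeriv n (fun t : ℝ => Q.eval (t:ℂ) / ((t:ℂ)^2+1)^M) x
      = (ratSeq M Q n).eval (x:ℂ) / ((x:ℂ)^2+1)^(M+n) := by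
  induction n generalizing x with
  | zero => simp [ratSeq]
  | succ n ih =>
    rw [iteratedDeriv_succ]
    have hEq : iteratedDeriv n (fun t : ℝ => Q.eval (t:ℂ) / ((t:ℂ)^2+1)^M)
        = fun t : ℝ => (ratSeq M Q n).eval (t:ℂ) / ((t:ℂ)^2+1)^(M+n) := funext ih
    rw [hEq]
    have h := (hasDerivAt_rat (ratSeq M Q n) (M+n) (by omega) (x:ℂ)
      (real_denom_ne x)).comp_ofReal
    rw [h.deriv]
    show _ = (ratSeq M Q (n+1)).eval (x:ℂ) / ((x:ℂ)^2+1)^(M+(n+1))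
    rw [show M + n + 1 = M + (n+1) by ring]
    rfl

lemma ratSeq_natDegree (M : ℕ) (Q : ℂ[X]) (d : ℕ) (hd : 1 ≤ d) (hQ : Q.natDegree ≤ d) :
    ∀ n, (ratSeq M Q n).natDegree ≤ d + n := by
  intro n
  induction n with
  | zero => simpa [ratSeq] using hQ
  | succ n ih =>
    show ((derivative (ratSeq M Q n)) * (X^2+1)
      - C ((2*(M+n) : ℕ) : ℂ) * X * ratSeq M Q n).natDegree ≤ d + (n+1)
    refine le_trans (natDegree_sub_le _ _) (max_le ?_ ?_)
    · refine le_trans (natDegree_mul_le) ?_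
      have h1 : (derivative (ratSeq M Q n)).natDegree ≤ d + n - 1 :=
        le_trans (natDegree_derivative_le _) (by omega)
      have h2 : (X^2+1 : ℂ[X]).natDegree ≤ 2 := by compute_degree
      omega
    · refine le_trans (natDegree_mul_le) ?_
      have h1 : (C ((2*(M+n) : ℕ) : ℂ) * X).natDegree ≤ 1 := by compute_degree
      omega

lemma eval_norm_le (p : ℂ[X]) (d : ℕ) (hd : p.natDegree ≤ d) (k : ℝ) (hk : 1 ≤ |k|) :
    ‖p.eval (k:ℂ)‖ ≤ (∑ m ∈ Finset.range (d+1), ‖p.coeff m‖) * |k|^d := by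
  rw [eval_eq_sum_range' (by omega : p.natDegree < d + 1)]
  refine le_trans (norm_sum_le _ _) ?_
  rw [Finset.sum_mul]
  refine Finset.sum_le_sum fun m hm => ?_
  rw [norm_mul, norm_pow, Complex.norm_real, Real.norm_eq_abs]
  refine mul_le_mul_of_nonneg_left ?_ (norm_nonneg _)
  have : m ≤ d := by
    have := Finset.mem_range.mp hm; omega
  exact pow_le_pow_right₀ hk this

lemma rat_infty_bound (M : ℕ) (hM : 1 ≤ M) (Q : ℂ[X]) (d : ℕ) (hd : 1 ≤ d)
    (hQ : Q.natDegree ≤ d) (n e : ℕ) (he : d + n + e ≤ 2*(M+n)) (k : ℝ) (hk : 1 ≤ |k|) :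
    ‖iteratedDeriv n (fun t : ℝ => Q.eval (t:ℂ) / ((t:ℂ)^2+1)^M) k‖
      ≤ (∑ m ∈ Finset.range (d+n+1), ‖(ratSeq M Q n).coeff m‖) / |k|^e := by
  rw [iteratedDeriv_rat M hM Q n k, norm_div]
  set B := ∑ m ∈ Finset.range (d+n+1), ‖(ratSeq M Q n).coeff m‖ with hB
  have hB0 : 0 ≤ B := Finset.sum_nonneg fun _ _ => norm_nonneg _
  have hk0 : (0:ℝ) < |k| := lt_of_lt_of_le one_pos hk
  have hnum : ‖(ratSeq M Q n).eval (k:ℂ)‖ ≤ B * |k|^(d+n) :=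
    eval_norm_le _ _ (ratSeq_natDegree M Q d hd hQ n) k hk
  have hcast : ((k:ℂ)^2+1) = ((k^2+1 : ℝ) : ℂ) := by push_cast; ring
  have hdenval : ‖((k:ℂ)^2+1)^(M+n)‖ = (k^2+1)^(M+n) := by
    rw [norm_pow, hcast, Complex.norm_real, Real.norm_eq_abs,
      abs_of_pos (by positivity : (0:ℝ) < k^2+1)]
  have hden : |k|^(2*(M+n)) ≤ ‖((k:ℂ)^2+1)^(M+n)‖ := by
    rw [hdenval, pow_mul, _root_.sq_abs]
    exact pow_le_pow_left₀ (sq_nonneg k) (by linarith) _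
  have hdenpos : (0:ℝ) < ‖((k:ℂ)^2+1)^(M+n)‖ := by
    rw [hdenval]; positivity
  rw [div_le_div_iff₀ hdenpos (by positivity)]
  calc ‖(ratSeq M Q n).eval (k:ℂ)‖ * |k|^e ≤ (B * |k|^(d+n)) * |k|^e := by
        exact mul_le_mul_of_nonneg_right hnum (by positivity)
    _ = B * |k|^(d+n+e) := by rw [pow_add]; ring
    _ ≤ B * |k|^(2*(M+n)) := by
        refine mul_le_mul_of_nonneg_left (pow_le_pow_right₀ hk he) hB0
    _ ≤ B * ‖((k:ℂ)^2+1)^(M+n)‖ := mul_le_mul_of_nonneg_left hden hB0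

lemma contDiff_poly_comp (p : ℂ[X]) : ContDiff ℝ ∞ (fun t : ℝ => p.eval (t:ℂ)) := by
  have h : (fun t : ℝ => p.eval (t:ℂ))
      = fun t : ℝ => ∑ m ∈ Finset.range (p.natDegree + 1), p.coeff m * (t:ℂ)^m := by
    funext t
    rw [eval_eq_sum_range]
  rw [h]
  exact ContDiff.sum fun i _ => contDiff_const.mul (Complex.ofRealCLM.contDiff.pow i)

lemma iteratedDeriv_poly (p : ℂ[X]) (m : ℕ) (x : ℝ) :
    iteratedDeriv m (fun t : ℝ => p.eval (t:ℂ)) x = (derivative^[m] p).eval (x:ℂ) := by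
  induction m generalizing p with
  | zero => simp
  | succ m ih =>
    rw [iteratedDeriv_succ']
    have hd : (deriv fun t : ℝ => p.eval (t:ℂ)) = fun t : ℝ => p.derivative.eval (t:ℂ) := by
      funext t
      exact ((p.hasDerivAt (t:ℂ)).comp_ofReal).deriv
    rw [hd, ih, ← Function.iterate_succ_apply]

lemma iteratedDeriv_poly_zero (p : ℂ[X]) (m : ℕ) :
    iteratedDeriv m (fun t : ℝ => p.eval (t:ℂ)) 0 = ((m.factorial : ℕ) : ℂ) * p.coeff m := by
  rw [iteratedDeriv_poly]
  push_cast
  rw [← coeff_zero_eq_eval_zero, coeff_iterate_derivative,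
    Nat.zero_add, Nat.descFactorial_self, nsmul_eq_mul]

/-- Rational approximation at the origin (from the proof of Lemma 4.1). -/
theorem rational_approximation_at_origin
    (r : SchwartzMap ℝ ℂ) (hsymm : ∀ k : ℝ, r k = -(starRingEnd ℂ) (r (-k)))
    (N : ℕ) (hN : 1 ≤ N) :
    ∃ (a b : ℕ → ℝ) (r₀ : ℂ → ℂ),
      (∀ k : ℂ, r₀ k =
        (∑ j ∈ Finset.range (2 * N + 2), ((a j : ℂ) * k + Complex.I * (b j : ℂ)) * k ^ (2 * j)) /
          (k ^ 2 + 1) ^ (3 * N + 4)) ∧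
      DifferentiableOn ℂ r₀ ({Complex.I, -Complex.I} : Set ℂ)ᶜ ∧
      (∀ k : ℂ, k ≠ Complex.I → k ≠ -Complex.I →
        r₀ k = -(starRingEnd ℂ) (r₀ (-(starRingEnd ℂ) k))) ∧
      ∃ C : ℝ, 0 < C ∧ ∀ n : ℕ, n ≤ N + 1 → ∀ k : ℝ,
        (|k| ≤ 1 →
          ‖iteratedDeriv n (fun x : ℝ => r x - r₀ (x : ℂ)) k‖ ≤ C * |k| ^ (4 * N + 4 - n)) ∧
        (1 ≤ |k| →
          ‖iteratedDeriv n (fun x : ℝ => r x - r₀ (x : ℂ)) k‖ ≤ C / |k| ^ (2 * N + 5)) := by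
  classical
  have hrsm : ContDiff ℝ ∞ (⇑r) := r.smooth'
  -- the weight function w
  set w : ℝ → ℂ := fun x => ((x:ℂ)^2+1)^(3*N+4) * r x with hwdef
  have hcoe : ContDiff ℝ ∞ (fun x : ℝ => (x:ℂ)) := Complex.ofRealCLM.contDiff
  have hden_sm : ContDiff ℝ ∞ (fun x : ℝ => ((x:ℂ)^2+1)^(3*N+4)) :=
    ((hcoe.pow 2).add contDiff_const).pow (3*N+4)
  have hwsm : ContDiff ℝ ∞ w := hden_sm.mul hrsm
  have hwsymm : ∀ x, w x = -(starRingEnd ℂ) (w (-x)) := by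
    intro x
    have hc : (starRingEnd ℂ) (w (-x)) = ((x:ℂ)^2+1)^(3*N+4) * (starRingEnd ℂ) (r (-x)) := by
      simp only [hwdef, map_mul, map_pow, map_add, map_one, Complex.ofReal_neg, map_neg,
        Complex.conj_ofReal, neg_neg, neg_sq]
    rw [hc]
    simp only [hwdef]
    rw [hsymm x]
    ring
  -- Taylor coefficients of w at 0
  set c : ℕ → ℂ := fun m => ((m.factorial : ℝ))⁻¹ • iteratedDeriv m w 0 with hcdef
  set a : ℕ → ℝ := fun j => (c (2*j+1)).re with hadef
  set b : ℕ → ℝ := fun j => (c (2*j)).im with hbdef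
  have hW := parity_lemma w hwsymm
  have hca : ∀ j, c (2*j+1) = ((a j : ℝ) : ℂ) := by
    intro j
    have h := hW (2*j+1)
    rw [Odd.neg_one_pow ⟨j, by ring⟩, neg_smul, one_smul, neg_neg] at h
    have him : (iteratedDeriv (2*j+1) w 0).im = 0 := by
      have := congrArg Complex.im h
      simp only [Complex.conj_im] at this
      linarith
    apply Complex.ext
    · simp [hadef]
    · simp [hbdef, hcdef, Complex.smul_im, him]
  have hcb : ∀ j, c (2*j) = Complex.I * ((b j : ℝ) : ℂ) := by
    intro j
    have h := hW (2*j)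
    rw [Even.neg_one_pow ⟨j, by ring⟩, one_smul] at h
    have hre : (iteratedDeriv (2*j) w 0).re = 0 := by
      have := congrArg Complex.re h
      simp only [Complex.neg_re, Complex.conj_re] at this
      linarith
    apply Complex.ext
    · simp [hcdef, Complex.smul_re, hre, Complex.mul_re]
    · simp [hbdef, Complex.mul_im]
  -- the numerator polynomial
  set Qp : ℂ[X] := ∑ m ∈ Finset.range (4*N+4), C (c m) * X^m with hQpdef
  have hQcoeff : ∀ m, m < 4*N+4 → Qp.coeff m = c m := by
    intro m hm
    rw [hQpdef, finset_sum_coeff]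
    simp only [coeff_C_mul, coeff_X_pow, mul_ite, mul_one, mul_zero]
    simp [Finset.sum_ite_eq, Finset.mem_range.mpr hm]
  have hQdeg : Qp.natDegree ≤ 4*N+3 := by
    rw [hQpdef]
    refine Polynomial.natDegree_sum_le_of_forall_le _ _ (fun i hi => ?_)
    have hi' : i ≤ 4*N+3 := by have := Finset.mem_range.mp hi; omega
    refine le_trans (natDegree_C_mul_le _ _) ?_
    simpa [natDegree_X_pow] using hi'
  -- the rational function
  set r₀ : ℂ → ℂ := fun z =>
    (∑ j ∈ Finset.range (2 * N + 2), ((a j : ℂ) * z + Complex.I * (b j : ℂ)) * z ^ (2 * j)) /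
      (z ^ 2 + 1) ^ (3 * N + 4) with hr₀def
  have hnum_eval : ∀ z : ℂ, Qp.eval z
      = ∑ j ∈ Finset.range (2 * N + 2), ((a j : ℂ) * z + Complex.I * (b j : ℂ)) * z ^ (2 * j) := by
    intro z
    have h1 : Qp.eval z = ∑ m ∈ Finset.range (4*N+4), c m * z^m := by
      rw [hQpdef, eval_finset_sum]
      simp
    rw [h1, show 4*N+4 = 2*(2*N+2) by ring, sum_pair]
    refine Finset.sum_congr rfl fun j _ => ?_
    rw [hca j, hcb j]
  have hr₀ : ∀ z : ℂ, r₀ z = Qp.eval z / (z^2+1)^(3*N+4) := by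
    intro z
    rw [hr₀def, hnum_eval z]
  -- zeros of the denominator
  have hzero : ∀ z : ℂ, z ≠ Complex.I → z ≠ -Complex.I → z^2+1 ≠ 0 := by
    intro z h1 h2 h
    have e : (z - Complex.I) * (z + Complex.I) = 0 := by
      have : (z - Complex.I) * (z + Complex.I) = z^2 + 1 := by
        have hI : Complex.I^2 = -1 := Complex.I_sq
        ring_nf
        rw [hI]
        ring
      rw [this, h]
    rcases mul_eq_zero.mp e with h' | h'
    · exact h1 (sub_eq_zero.mp h')
    · exact h2 (eq_neg_of_add_eq_zero_left h')
  refine ⟨a, b, r₀, fun k => rfl, ?_, ?_, ?_⟩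
  · -- differentiability
    intro z hz
    simp only [Set.mem_compl_iff, Set.mem_insert_iff, Set.mem_singleton_iff, not_or] at hz
    apply DifferentiableAt.differentiableWithinAt
    rw [hr₀def]
    apply DifferentiableAt.div
    · apply Differentiable.differentiableAt
      apply Differentiable.fun_sum
      intro j _
      exact ((differentiable_const _ |>.mul differentiable_id).add
        (differentiable_const _)).mul (differentiable_pow _)
    · exact ((differentiable_pow 2).add_const 1 |>.pow _).differentiableAt
    · exact pow_ne_zero _ (hzero z hz.1 hz.2)
  · -- symmetry
    intro k _ _
    have hd : (starRingEnd ℂ) (((-(starRingEnd ℂ) k)^2+1)^(3*N+4)) = (k^2+1)^(3*N+4) := by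
      simp [map_pow, map_add, Complex.conj_conj]
    have hn : (starRingEnd ℂ) (∑ j ∈ Finset.range (2 * N + 2),
          ((a j : ℂ) * (-(starRingEnd ℂ) k) + Complex.I * (b j : ℂ))
            * (-(starRingEnd ℂ) k) ^ (2 * j))
        = -∑ j ∈ Finset.range (2 * N + 2),
            ((a j : ℂ) * k + Complex.I * (b j : ℂ)) * k ^ (2 * j) := by
      rw [map_sum, ← Finset.sum_neg_distrib]
      refine Finset.sum_congr rfl fun j _ => ?_
      have hev : ∀ z : ℂ, (-z) ^ (2*j) = z ^ (2*j) := fun z => Even.neg_pow ⟨j, by ring⟩ z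
      simp only [map_mul, map_add, map_pow, map_neg, Complex.conj_conj, Complex.conj_I,
        Complex.conj_ofReal]
      rw [hev]
      ring
    rw [hr₀def]
    simp only
    rw [map_div₀, hn, hd, neg_div, neg_neg]
  · -- the estimates
    have hφeq : (fun x : ℝ => r₀ (x:ℂ))
        = fun x : ℝ => Qp.eval (x:ℂ) / ((x:ℂ)^2+1)^(3*N+4) := funext fun x => hr₀ _
    have hφsm : ContDiff ℝ ∞ (fun x : ℝ => r₀ (x:ℂ)) := by
      rw [hφeq]
      have h := (contDiff_poly_comp Qp).mul
        (hden_sm.inv (fun x => pow_ne_zero _ (real_denom_ne x)))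
      simpa [div_eq_mul_inv] using h
    have hFsm : ContDiff ℝ ∞ (fun x : ℝ => r x - r₀ (x:ℂ)) := hrsm.sub hφsm
    -- vanishing of derivatives at 0
    have hQw : ∀ m, m ≤ 4*N+3 → iteratedDeriv m (fun x : ℝ => Qp.eval (x:ℂ)) 0
        = iteratedDeriv m w 0 := by
      intro m hm
      rw [iteratedDeriv_poly_zero, hQcoeff m (by omega)]
      have hfac : ((m.factorial : ℝ) : ℂ) ≠ 0 := by
        exact_mod_cast Nat.cast_ne_zero.mpr m.factorial_ne_zero
      simp only [hcdef]
      rw [Complex.real_smul, Complex.ofReal_inv]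
      rw [← mul_assoc]
      rw [show ((m.factorial : ℕ) : ℂ) = ((m.factorial : ℝ) : ℂ) by push_cast; ring]
      rw [mul_inv_cancel₀ hfac, one_mul]
    have hFz : ∀ m, m ≤ 4*N+3 → iteratedDeriv m (fun x : ℝ => r x - r₀ (x:ℂ)) 0 = 0 := by
      have hFeq : (fun x : ℝ => r x - r₀ (x:ℂ))
          = fun x : ℝ => (w x - Qp.eval (x:ℂ)) * ((((x:ℂ)^2+1)^(3*N+4))⁻¹) := by
        funext x
        rw [hr₀, hwdef]
        simp only
        field_simp
        rw [sub_div, mul_div_cancel_right₀ _ (pow_ne_zero _ (real_denom_ne x))]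
      rw [hFeq]
      intro m hm
      refine vanish_mul m _ _ (hwsm.sub (contDiff_poly_comp Qp))
        (hden_sm.inv (fun x => pow_ne_zero _ (real_denom_ne x))) (fun j hj => ?_)
      rw [my_iteratedDeriv_sub hwsm (contDiff_poly_comp Qp), hQw j (by omega), sub_self]
    -- bound near zero
    obtain ⟨M₀, hM₀⟩ := (isCompact_Icc (a := (-1:ℝ)) (b := 1)).exists_bound_of_continuousOn
      ((contDiff_iteratedDeriv hFsm (4*N+4)).continuous.continuousOn)
    have hM₀0 : 0 ≤ M₀ := le_trans (norm_nonneg _) (hM₀ 0 (by norm_num))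
    have hnz := near_zero_bound hFsm (4*N+3) hFz
      (fun k hk => hM₀ k (by
        rw [Set.mem_Icc]
        have := abs_le.mp hk
        exact ⟨this.1, this.2⟩))
    -- Schwartz decay constants
    choose Cs hCs0 hCs using fun n => r.decay (2*N+5) n
    -- rational decay constants
    set B : ℕ → ℝ := fun n =>
      ∑ m ∈ Finset.range (4*N+3+n+1), ‖(ratSeq (3*N+4) Qp n).coeff m‖ with hBdef
    have hB0 : ∀ n, 0 ≤ B n := fun n => Finset.sum_nonneg fun _ _ => norm_nonneg _
    set Ctot : ℝ := M₀ + (∑ n ∈ Finset.range (N+2), (Cs n + B n)) + 1 with hCtotdef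
    have hsum0 : 0 ≤ ∑ n ∈ Finset.range (N+2), (Cs n + B n) :=
      Finset.sum_nonneg fun i _ => add_nonneg (le_of_lt (hCs0 i)) (hB0 i)
    have hCpos : 0 < Ctot := by rw [hCtotdef]; linarith
    refine ⟨Ctot, hCpos, fun n hn k => ⟨?_, ?_⟩⟩
    · -- near zero
      intro hk
      have h1 := hnz (4*N+4-n) (by omega) k hk
      have e : 4*N+3+1 - (4*N+4-n) = n := by omega
      rw [e] at h1
      refine le_trans h1 ?_
      have hMC : M₀ ≤ Ctot := by rw [hCtotdef]; linarith
      exact mul_le_mul_of_nonneg_right hMC (pow_nonneg (abs_nonneg k) _)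
    · -- at infinity
      intro hk
      have hk0 : (0:ℝ) < |k| := lt_of_lt_of_le one_pos hk
      have hsplit : iteratedDeriv n (fun x : ℝ => r x - r₀ (x:ℂ)) k
          = iteratedDeriv n (⇑r) k - iteratedDeriv n (fun x : ℝ => r₀ (x:ℂ)) k :=
        my_iteratedDeriv_sub hrsm hφsm k
      have hrb : ‖iteratedDeriv n (⇑r) k‖ ≤ Cs n / |k|^(2*N+5) := by
        have h := hCs n k
        rw [norm_iteratedFDeriv_eq_norm_iteratedDeriv, Real.norm_eq_abs] at h
        rw [le_div_iff₀ (by positivity)]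
        rw [mul_comm]
        exact h
      have hφb : ‖iteratedDeriv n (fun x : ℝ => r₀ (x:ℂ)) k‖ ≤ B n / |k|^(2*N+5) := by
        rw [hφeq]
        exact rat_infty_bound (3*N+4) (by omega) Qp (4*N+3) (by omega) hQdeg n (2*N+5)
          (by omega) k hk
      have hle : Cs n + B n ≤ Ctot := by
        have := Finset.single_le_sum
          (f := fun i => Cs i + B i)
          (fun i _ => add_nonneg (le_of_lt (hCs0 i)) (hB0 i))
          (Finset.mem_range.mpr (by omega : n < N+2))
        rw [hCtotdef]
        linarith
      calc ‖iteratedDeriv n (fun x : ℝ => r x - r₀ (x:ℂ)) k‖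
          = ‖iteratedDeriv n (⇑r) k - iteratedDeriv n (fun x : ℝ => r₀ (x:ℂ)) k‖ := by
            rw [hsplit]
        _ ≤ ‖iteratedDeriv n (⇑r) k‖ + ‖iteratedDeriv n (fun x : ℝ => r₀ (x:ℂ)) k‖ :=
            norm_sub_le _ _
        _ ≤ Cs n / |k|^(2*N+5) + B n / |k|^(2*N+5) := add_le_add hrb hφb
        _ = (Cs n + B n) / |k|^(2*N+5) := by rw [add_div]
        _ ≤ Ctot / |k|^(2*N+5) := by
            gcongr
end

section
/- Exponential comparison near a small critical point. For every c₀ > 0 there exists a constant C > 0 (depending only on c₀) such that for all t > 0, all k₀ ≥ 0 with t k₀³ ≤ c₀, and all r ≥ 0, with k = k₀ + r e^{iπ/6}: exp(−6 t |k − k₀|³) ≤ C exp(−2 t |k|³). -/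
/-- Exponential comparison near a small critical point. -/
theorem exp_comparison_near_critical_point (c0 : ℝ) (hc0 : 0 < c0) :
    ∃ C : ℝ, 0 < C ∧
      ∀ t : ℝ, 0 < t → ∀ k0 : ℝ, 0 ≤ k0 → t * k0 ^ 3 ≤ c0 → ∀ r : ℝ, 0 ≤ r →
        ∀ k : ℂ, k = (k0 : ℂ) + (r : ℂ) * Complex.exp (Real.pi / 6 * Complex.I) →
          Real.exp (-6 * t * ‖k - (k0 : ℂ)‖ ^ 3) ≤ C * Real.exp (-2 * t * ‖k‖ ^ 3) := by
  refine ⟨Real.exp (86 * c0), Real.exp_pos _, ?_⟩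
  intro t ht k0 hk0 hc r hr k hk
  have hnormexp : ‖Complex.exp (Real.pi / 6 * Complex.I)‖ = 1 := by
    rw [Complex.norm_exp]
    simp
  have hkr : ‖k - (k0 : ℂ)‖ = r := by
    have : k - (k0 : ℂ) = (r : ℂ) * Complex.exp (Real.pi / 6 * Complex.I) := by
      rw [hk]; ring
    rw [this, norm_mul, hnormexp, mul_one, Complex.norm_real, Real.norm_of_nonneg hr]
  have hnorm : ‖k‖ ≤ k0 + r := by
    rw [hk]
    calc ‖(k0 : ℂ) + (r : ℂ) * Complex.exp (Real.pi / 6 * Complex.I)‖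
        ≤ ‖(k0 : ℂ)‖ + ‖(r : ℂ) * Complex.exp (Real.pi / 6 * Complex.I)‖ := norm_add_le _ _
      _ = k0 + r := by
          rw [norm_mul, hnormexp, mul_one, Complex.norm_real, Complex.norm_real,
            Real.norm_of_nonneg hr, Real.norm_of_nonneg hk0]
  have hpow : ‖k‖ ^ 3 ≤ (k0 + r) ^ 3 := pow_le_pow_left₀ (norm_nonneg k) hnorm 3
  rw [hkr, ← Real.exp_add]
  apply Real.exp_le_exp.mpr
  nlinarith [mul_le_mul_of_nonneg_left hpow ht.le, mul_pos ht hc0, sq_nonneg (k0 - r),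
    sq_nonneg (k0 + r), mul_nonneg (mul_nonneg ht.le hk0) hr,
    mul_nonneg (mul_nonneg ht.le hk0) (sq_nonneg (k0 - r)),
    mul_nonneg (mul_nonneg ht.le hr) (sq_nonneg (k0 - r)),
    mul_nonneg (mul_nonneg ht.le hk0) (sq_nonneg (2*k0 - r)),
    mul_nonneg (mul_nonneg ht.le hr) (sq_nonneg (2*k0 - r))]
end

section
/- Airy-type contour integral. Define A : ℝ → ℂ by A(y) = (1/π) ∫_{Y₁∪Y₂} e^{2i(yz + 4z³/3)} dz. Then: (i) the defining integrals converge absolutely for every y ∈ ℝ; (ii) A is real-valued; (iii) A is infinitely differentiable, and for every integer j ≥ 0 and every y ∈ ℝ the integral ∫_{Y₁∪Y₂} z^j e^{2i(yz + 4z³/3)} dz converges absolutely and A^{(j)}(y) = ((2i)^j / π) ∫_{Y₁∪Y₂} z^j e^{2i(yz + 4z³/3)} dz; (iv) A satisfies the Airy equation A''(y) = y A(y) for all y ∈ ℝ. -/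
open MeasureTheory Set

/-- The unit direction `e^{iπ/6}` of the ray `Y₁`. -/
noncomputable def e1 : ℂ := Complex.exp (Real.pi / 6 * Complex.I)

/-- The unit direction `e^{5iπ/6}` of the ray `Y₂`. -/
noncomputable def e5 : ℂ := Complex.exp (5 * Real.pi / 6 * Complex.I)

/-- The contour integral over `Y₁ ∪ Y₂`:
`∫_{Y₁∪Y₂} h(z) dz = ∫₀^∞ h(r e^{iπ/6}) e^{iπ/6} dr - ∫₀^∞ h(r e^{5iπ/6}) e^{5iπ/6} dr`. -/
noncomputable def CInt12 (h : ℂ → ℂ) : ℂ :=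
  (∫ r in Ioi (0 : ℝ), h (r * e1)) * e1 - (∫ r in Ioi (0 : ℝ), h (r * e5)) * e5

/-- The Airy-type function `A(y) = (1/π) ∫_{Y₁∪Y₂} e^{2i(yz + 4z³/3)} dz`. -/
noncomputable def AiryA (y : ℝ) : ℂ :=
  (Real.pi : ℂ)⁻¹ * CInt12 (fun z => Complex.exp (2 * Complex.I * (y * z + 4 * z ^ 3 / 3)))

lemma e1_eq : e1 = Complex.exp (↑(Real.pi/6) * Complex.I) := by
  unfold e1; push_cast; ring_nf

lemma e5_eq : e5 = Complex.exp (↑(5*Real.pi/6) * Complex.I) := by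
  unfold e5; push_cast; ring_nf

lemma e1_im : e1.im = 1/2 := by
  rw [e1_eq, Complex.exp_ofReal_mul_I_im]
  rw [Real.sin_pi_div_six]

lemma e5_im : e5.im = 1/2 := by
  rw [e5_eq, Complex.exp_ofReal_mul_I_im]
  have : 5*Real.pi/6 = Real.pi - Real.pi/6 := by ring
  rw [this, Real.sin_pi_sub, Real.sin_pi_div_six]

lemma e1_cube : e1^3 = Complex.I := by
  rw [e1_eq, ← Complex.exp_nat_mul]
  have : ((3:ℕ):ℂ) * (↑(Real.pi/6) * Complex.I) = ↑(Real.pi/2) * Complex.I := by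
    push_cast; ring
  rw [this]
  refine Complex.ext ?_ ?_
  · rw [Complex.exp_ofReal_mul_I_re, Real.cos_pi_div_two, Complex.I_re]
  · rw [Complex.exp_ofReal_mul_I_im, Real.sin_pi_div_two, Complex.I_im]

lemma e5_cube : e5^3 = Complex.I := by
  rw [e5_eq, ← Complex.exp_nat_mul]
  have : ((3:ℕ):ℂ) * (↑(5*Real.pi/6) * Complex.I) = ↑(Real.pi/2 + 2*Real.pi) * Complex.I := by
    push_cast; ring
  rw [this]
  refine Complex.ext ?_ ?_
  · rw [Complex.exp_ofReal_mul_I_re, Real.cos_add_two_pi, Real.cos_pi_div_two, Complex.I_re]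
  · rw [Complex.exp_ofReal_mul_I_im, Real.sin_add_two_pi, Real.sin_pi_div_two, Complex.I_im]

lemma e1_norm : ‖e1‖ = 1 := by
  rw [e1_eq, Complex.norm_exp]
  simp

lemma e5_norm : ‖e5‖ = 1 := by
  rw [e5_eq, Complex.norm_exp]
  simp

lemma conj_e1 : (starRingEnd ℂ) e1 = -e5 := by
  rw [e1_eq, e5_eq, ← Complex.exp_conj]
  have h1 : (starRingEnd ℂ) (↑(Real.pi/6) * Complex.I) = ↑(-(Real.pi/6)) * Complex.I := by
    rw [map_mul, Complex.conj_I, Complex.conj_ofReal]; push_cast; ring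
  rw [h1]
  have : -Complex.exp (↑(5*Real.pi/6) * Complex.I)
      = Complex.exp (↑Real.pi * Complex.I) * Complex.exp (↑(5*Real.pi/6) * Complex.I) := by
    rw [Complex.exp_pi_mul_I]; ring
  rw [this, ← Complex.exp_add]
  have h2 : (↑(-(Real.pi/6)) : ℂ) * Complex.I =
      (↑Real.pi * Complex.I + ↑(5*Real.pi/6) * Complex.I) + (-(2*↑Real.pi*Complex.I)) := by
    push_cast; ring
  rw [h2, Complex.exp_add]
  simp [Complex.exp_neg, Complex.exp_two_pi_mul_I]

lemma conj_e5 : (starRingEnd ℂ) e5 = -e1 := by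
  have := conj_e1
  have h := congrArg (starRingEnd ℂ) this
  simp at h
  linear_combination h


lemma expo_re (e : ℂ) (he3 : e^3 = Complex.I) (heim : e.im = 1/2) (y r : ℝ) :
    (2*Complex.I*((y:ℂ)*((r:ℂ)*e)+4*((r:ℂ)*e)^3/3)).re = -(y*r) - 8*r^3/3 := by
  have h : 2*Complex.I*((y:ℂ)*((r:ℂ)*e)+4*((r:ℂ)*e)^3/3)
      = ((2*y*r : ℝ):ℂ) * (Complex.I * e) + ((-(8*r^3/3) : ℝ):ℂ) := by
    rw [mul_pow, he3]
    push_cast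
    linear_combination (8*(r:ℂ)^3/3) * Complex.I_mul_I
  rw [h]
  simp [Complex.add_re, Complex.mul_re, Complex.I_re, Complex.I_im, heim,
    ← Complex.ofReal_pow]
  ring

lemma expo_norm (e : ℂ) (he3 : e^3 = Complex.I) (heim : e.im = 1/2) (y r : ℝ) :
    ‖Complex.exp (2*Complex.I*((y:ℂ)*((r:ℂ)*e)+4*((r:ℂ)*e)^3/3))‖
      = Real.exp (-(y*r) - 8*r^3/3) := by
  rw [Complex.norm_exp, expo_re e he3 heim]

lemma integrable_exp_cubic (b : ℝ) :
    IntegrableOn (fun r : ℝ => Real.exp (b*r - 8*r^3/3)) (Ioi 0) := by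
  have hc1 : (1:ℝ) ≤ max (b+1) 1 := le_max_right _ _
  have hcb : b + 1 ≤ max (b+1) 1 := le_max_left _ _
  set c : ℝ := max (b+1) 1
  have hint : IntegrableOn (fun r : ℝ => Real.exp (c^2) * Real.exp (-1*r)) (Ioi 0) :=
    (exp_neg_integrableOn_Ioi 0 one_pos).const_mul _
  apply Integrable.mono' hint
  · exact (Real.continuous_exp.comp (by continuity)).aestronglyMeasurable
  · filter_upwards [ae_restrict_mem measurableSet_Ioi] with r hr
    rw [Real.norm_eq_abs, Real.abs_exp, ← Real.exp_add]
    apply Real.exp_le_exp.2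
    have hr' : (0:ℝ) < r := hr
    rcases le_total r c with h | h
    · nlinarith [mul_nonneg hr'.le (mul_nonneg hr'.le hr'.le)]
    · nlinarith [mul_nonneg hr'.le (mul_nonneg hr'.le hr'.le), mul_nonneg hr'.le hr'.le]

lemma key_integrable (e : ℂ) (he3 : e^3 = Complex.I) (heim : e.im = 1/2) (hen : ‖e‖ = 1)
    (j : ℕ) (y : ℝ) :
    IntegrableOn
      (fun r : ℝ => ((r:ℂ)*e)^j * Complex.exp (2*Complex.I*((y:ℂ)*((r:ℂ)*e)+4*((r:ℂ)*e)^3/3)))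
      (Ioi 0) := by
  have hint : IntegrableOn (fun r : ℝ => Real.exp (((j:ℝ) - y)*r - 8*r^3/3)) (Ioi 0) :=
    integrable_exp_cubic _
  apply Integrable.mono' hint
  · apply Continuous.aestronglyMeasurable
    fun_prop
  · filter_upwards [ae_restrict_mem measurableSet_Ioi] with r hr
    have hr' : (0:ℝ) < r := hr
    rw [norm_mul, norm_pow, norm_mul, hen, mul_one, Complex.norm_real, Real.norm_eq_abs,
      abs_of_pos hr', expo_norm e he3 heim]
    have h1 : r^j ≤ Real.exp ((j:ℝ)*r) := by
      calc r^j ≤ (Real.exp r)^j := by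
            apply pow_le_pow_left₀ hr'.le
            linarith [Real.add_one_le_exp r]
        _ = Real.exp ((j:ℝ)*r) := by rw [← Real.exp_nat_mul]
    calc r^j * Real.exp (-(y*r) - 8*r^3/3)
        ≤ Real.exp ((j:ℝ)*r) * Real.exp (-(y*r) - 8*r^3/3) := by
          apply mul_le_mul_of_nonneg_right h1 (Real.exp_nonneg _)
      _ = Real.exp (((j:ℝ) - y)*r - 8*r^3/3) := by rw [← Real.exp_add]; congr 1; ring


lemma rpow_le_exp (j : ℕ) (r : ℝ) (hr : 0 ≤ r) : r^j ≤ Real.exp ((j:ℝ)*r) := by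
  calc r^j ≤ (Real.exp r)^j := by
        apply pow_le_pow_left₀ hr
        linarith [Real.add_one_le_exp r]
    _ = Real.exp ((j:ℝ)*r) := by rw [← Real.exp_nat_mul]

lemma ptwise_hasDerivAt (e : ℂ) (j : ℕ) (r : ℝ) (y : ℝ) :
    HasDerivAt
      (fun y' : ℝ => ((r:ℂ)*e)^j *
        Complex.exp (2*Complex.I*((y':ℂ)*((r:ℂ)*e)+4*((r:ℂ)*e)^3/3)))
      (2*Complex.I*(((r:ℂ)*e)^(j+1) *
        Complex.exp (2*Complex.I*((y:ℂ)*((r:ℂ)*e)+4*((r:ℂ)*e)^3/3)))) y := by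
  set z : ℂ := (r:ℂ)*e with hz
  have h0 : HasDerivAt (fun y' : ℝ => ((y':ℂ))) 1 y := by
    simpa using (hasDerivAt_id y).ofReal_comp
  have hu : HasDerivAt (fun y' : ℝ => 2*Complex.I*((y':ℂ)*z+4*z^3/3))
      (2*Complex.I*(1*z)) y := (((h0.mul_const z).add_const (4*z^3/3)).const_mul _)
  have he := hu.cexp
  have := he.const_mul (z^j)
  refine this.congr_deriv ?_
  rw [pow_succ]
  ring

lemma integral_hasDerivAt (e : ℂ) (he3 : e^3 = Complex.I) (heim : e.im = 1/2)
    (hen : ‖e‖ = 1) (j : ℕ) (y : ℝ) :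
    HasDerivAt
      (fun y' : ℝ => ∫ r in Ioi (0:ℝ), ((r:ℂ)*e)^j *
        Complex.exp (2*Complex.I*((y':ℂ)*((r:ℂ)*e)+4*((r:ℂ)*e)^3/3)))
      (2*Complex.I * ∫ r in Ioi (0:ℝ), ((r:ℂ)*e)^(j+1) *
        Complex.exp (2*Complex.I*((y:ℂ)*((r:ℂ)*e)+4*((r:ℂ)*e)^3/3))) y := by
  have bound_int : IntegrableOn
      (fun r : ℝ => 2 * Real.exp ((((j:ℝ)+1) + (|y|+1))*r - 8*r^3/3)) (Ioi 0) :=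
    (integrable_exp_cubic _).const_mul 2
  have key := hasDerivAt_integral_of_dominated_loc_of_deriv_le
    (F := fun (y' : ℝ) (r : ℝ) => ((r:ℂ)*e)^j *
        Complex.exp (2*Complex.I*((y':ℂ)*((r:ℂ)*e)+4*((r:ℂ)*e)^3/3)))
    (F' := fun (y' : ℝ) (r : ℝ) => 2*Complex.I*(((r:ℂ)*e)^(j+1) *
        Complex.exp (2*Complex.I*((y':ℂ)*((r:ℂ)*e)+4*((r:ℂ)*e)^3/3))))
    (x₀ := y)
    (bound := fun r : ℝ => 2 * Real.exp ((((j:ℝ)+1) + (|y|+1))*r - 8*r^3/3))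
    (Metric.ball_mem_nhds y zero_lt_one)
    (Filter.Eventually.of_forall fun y' => by
      apply Continuous.aestronglyMeasurable; fun_prop)
    (key_integrable e he3 heim hen j y)
    (by apply Continuous.aestronglyMeasurable; fun_prop)
    ?_ bound_int ?_
  · have h2 := key.2
    rwa [MeasureTheory.integral_const_mul] at h2
  · filter_upwards [ae_restrict_mem measurableSet_Ioi] with r hr
    intro y' hy'
    have hr' : (0:ℝ) < r := hr
    have hb : |y'| ≤ |y| + 1 := by
      have h' := mem_ball_iff_norm.1 hy'
      rw [Real.norm_eq_abs] at h'
      have h'' := abs_sub_abs_le_abs_sub y' y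
      linarith
    have hnorm : ‖2*Complex.I*(((r:ℂ)*e)^(j+1) *
        Complex.exp (2*Complex.I*((y':ℂ)*((r:ℂ)*e)+4*((r:ℂ)*e)^3/3)))‖
        = 2 * (r^(j+1) * Real.exp (-(y'*r) - 8*r^3/3)) := by
      rw [norm_mul]
      congr 1
      · simp
      · rw [norm_mul, norm_pow, norm_mul, Complex.norm_real, hen, mul_one,
          Real.norm_eq_abs, abs_of_pos hr', expo_norm e he3 heim]
    rw [hnorm]
    have h1 : r^(j+1) ≤ Real.exp (((j:ℝ)+1)*r) := by
      have := rpow_le_exp (j+1) r hr'.le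
      rwa [Nat.cast_add, Nat.cast_one] at this
    have h2 : Real.exp (-(y'*r) - 8*r^3/3) ≤ Real.exp ((|y|+1)*r - 8*r^3/3) := by
      apply Real.exp_le_exp.2
      have : -(y'*r) ≤ (|y|+1)*r := by
        have := neg_abs_le y'
        nlinarith [abs_nonneg y']
      linarith
    calc 2 * (r^(j+1) * Real.exp (-(y'*r) - 8*r^3/3))
        ≤ 2 * (Real.exp (((j:ℝ)+1)*r) * Real.exp ((|y|+1)*r - 8*r^3/3)) := by
          apply mul_le_mul_of_nonneg_left _ (by norm_num)
          exact mul_le_mul h1 h2 (Real.exp_nonneg _) (Real.exp_nonneg _)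
      _ = 2 * Real.exp ((((j:ℝ)+1) + (|y|+1))*r - 8*r^3/3) := by
          rw [← Real.exp_add]; congr 1; ring
  · filter_upwards with r
    intro y' hy'
    exact ptwise_hasDerivAt e j r y'


noncomputable def Gf (j : ℕ) (y : ℝ) : ℂ :=
  ((2*Complex.I)^j / (Real.pi:ℂ)) *
    CInt12 (fun z => z^j * Complex.exp (2*Complex.I*((y:ℂ)*z + 4*z^3/3)))

lemma Gf_hasDerivAt (j : ℕ) (y : ℝ) : HasDerivAt (Gf j) (Gf (j+1) y) y := by
  have h1 := integral_hasDerivAt e1 e1_cube e1_im e1_norm j y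
  have h5 := integral_hasDerivAt e5 e5_cube e5_im e5_norm j y
  have key := ((h1.mul_const e1).sub (h5.mul_const e5)).const_mul
    ((2*Complex.I)^j / (Real.pi:ℂ))
  have : Gf j = fun y' : ℝ => ((2*Complex.I)^j / (Real.pi:ℂ)) *
      ((∫ r in Ioi (0:ℝ), ((r:ℂ)*e1)^j *
        Complex.exp (2*Complex.I*((y':ℂ)*((r:ℂ)*e1)+4*((r:ℂ)*e1)^3/3))) * e1
      - (∫ r in Ioi (0:ℝ), ((r:ℂ)*e5)^j *
        Complex.exp (2*Complex.I*((y':ℂ)*((r:ℂ)*e5)+4*((r:ℂ)*e5)^3/3))) * e5) := by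
    funext y'; simp only [Gf, CInt12]
  rw [this]
  refine key.congr_deriv ?_
  simp only [Gf, CInt12]
  rw [pow_succ]
  ring

lemma iter_eq : ∀ j : ℕ, iteratedDeriv j AiryA = Gf j := by
  intro j
  induction j with
  | zero =>
    rw [iteratedDeriv_zero]
    funext y
    simp only [AiryA, Gf, pow_zero, one_div]
    congr 2
    funext z
    exact (one_mul _).symm
  | succ j ih =>
    rw [iteratedDeriv_succ, ih]
    funext y
    exact (Gf_hasDerivAt j y).deriv

lemma airy_smooth (n : ℕ) : ContDiff ℝ n AiryA := by
  apply contDiff_of_differentiable_iteratedDeriv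
  intro m _
  rw [iter_eq m]
  exact fun y => (Gf_hasDerivAt m y).differentiableAt

lemma conj_exp_swap15 (y r : ℝ) :
    (starRingEnd ℂ) (Complex.exp (2*Complex.I*((y:ℂ)*((r:ℂ)*e1)+4*((r:ℂ)*e1)^3/3)))
    = Complex.exp (2*Complex.I*((y:ℂ)*((r:ℂ)*e5)+4*((r:ℂ)*e5)^3/3)) := by
  rw [← Complex.exp_conj]
  congr 1
  simp only [map_mul, map_add, map_div₀, map_pow, map_ofNat, Complex.conj_I,
    Complex.conj_ofReal, conj_e1]
  ring

lemma conj_exp_swap51 (y r : ℝ) :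
    (starRingEnd ℂ) (Complex.exp (2*Complex.I*((y:ℂ)*((r:ℂ)*e5)+4*((r:ℂ)*e5)^3/3)))
    = Complex.exp (2*Complex.I*((y:ℂ)*((r:ℂ)*e1)+4*((r:ℂ)*e1)^3/3)) := by
  rw [← Complex.exp_conj]
  congr 1
  simp only [map_mul, map_add, map_div₀, map_pow, map_ofNat, Complex.conj_I,
    Complex.conj_ofReal, conj_e5]
  ring

lemma airy_real (y : ℝ) : (AiryA y).im = 0 := by
  rw [← Complex.conj_eq_iff_im]
  simp only [AiryA, CInt12]
  rw [map_mul, map_sub, map_mul, map_mul, conj_e1, conj_e5,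
    ← integral_conj, ← integral_conj, map_inv₀, Complex.conj_ofReal]
  simp only [conj_exp_swap15, conj_exp_swap51]
  ring


lemma cubic_bound (b r : ℝ) (hr : 0 ≤ r) : b*r - 8*r^3/3 ≤ (max (b+1) 1)^2 - r := by
  have hc1 : (1:ℝ) ≤ max (b+1) 1 := le_max_right _ _
  have hcb : b + 1 ≤ max (b+1) 1 := le_max_left _ _
  set c := max (b+1) 1
  rcases le_total r c with h | h
  · nlinarith [mul_nonneg hr (mul_nonneg hr hr)]
  · nlinarith [mul_nonneg hr (mul_nonneg hr hr), mul_nonneg hr hr]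

lemma f_tendsto (e : ℂ) (he3 : e^3 = Complex.I) (heim : e.im = 1/2) (y : ℝ) :
    Filter.Tendsto
      (fun r : ℝ => Complex.exp (2*Complex.I*((y:ℂ)*((r:ℂ)*e)+4*((r:ℂ)*e)^3/3)))
      Filter.atTop (nhds 0) := by
  apply squeeze_zero_norm'
    (a := fun r : ℝ => Real.exp ((max (-y+1) 1)^2 - r))
  · filter_upwards [Filter.eventually_ge_atTop (0:ℝ)] with r hr
    rw [expo_norm e he3 heim]
    apply Real.exp_le_exp.2
    have h := cubic_bound (-y) r hr
    ring_nf at h ⊢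
    linarith
  · have h1 : Filter.Tendsto (fun r : ℝ => (max (-y+1) 1)^2 - r) Filter.atTop Filter.atBot := by
      apply Filter.tendsto_atBot_add_const_left
      exact Filter.tendsto_neg_atTop_atBot
    simpa using h1

lemma ray_identity (e : ℂ) (he3 : e^3 = Complex.I) (heim : e.im = 1/2) (hen : ‖e‖ = 1)
    (y : ℝ) :
    2*Complex.I*(y:ℂ)*e *
      (∫ r in Ioi (0:ℝ), Complex.exp (2*Complex.I*((y:ℂ)*((r:ℂ)*e)+4*((r:ℂ)*e)^3/3)))
    + 8*Complex.I*e *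
      (∫ r in Ioi (0:ℝ), ((r:ℂ)*e)^2 *
        Complex.exp (2*Complex.I*((y:ℂ)*((r:ℂ)*e)+4*((r:ℂ)*e)^3/3)))
    = -1 := by
  set f : ℝ → ℂ :=
    fun r => Complex.exp (2*Complex.I*((y:ℂ)*((r:ℂ)*e)+4*((r:ℂ)*e)^3/3)) with hf
  have h0int : IntegrableOn f (Ioi 0) := by
    have := key_integrable e he3 heim hen 0 y
    simpa [hf] using this
  have h2int : IntegrableOn (fun r : ℝ => ((r:ℂ)*e)^2 * f r) (Ioi 0) :=
    key_integrable e he3 heim hen 2 y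
  have hderiv : ∀ x ∈ Ici (0:ℝ), HasDerivAt f
      (2*Complex.I*(y:ℂ)*e * f x + 8*Complex.I*e * (((x:ℂ)*e)^2 * f x)) x := by
    intro x _
    have h0 : HasDerivAt (fun r:ℝ => ((r:ℂ)*e)) (1*e) x := by
      exact ((hasDerivAt_id x).ofReal_comp).mul_const e
    have hcube : HasDerivAt (fun r:ℝ => ((r:ℂ)*e)^3)
        ((1*e)*(((x:ℂ)*e)*((x:ℂ)*e)) + ((x:ℂ)*e)*((1*e)*((x:ℂ)*e) + ((x:ℂ)*e)*(1*e))) x := by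
      have h3 : (fun r:ℝ => ((r:ℂ)*e)^3)
          = fun r:ℝ => ((r:ℂ)*e)*(((r:ℂ)*e)*((r:ℂ)*e)) := by funext r; ring
      rw [h3]
      exact h0.mul (h0.mul h0)
    have hu := (((h0.const_mul (y:ℂ)).add ((hcube.const_mul 4).div_const 3)).const_mul
      (2*Complex.I))
    have he' := hu.cexp
    refine he'.congr_deriv ?_
    simp only [hf, Pi.add_apply]
    push_cast
    ring
  have htend := f_tendsto e he3 heim y
  have f'int : IntegrableOn
      (fun x : ℝ => 2*Complex.I*(y:ℂ)*e * f x + 8*Complex.I*e * (((x:ℂ)*e)^2 * f x))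
      (Ioi 0) := (h0int.const_mul _).add (h2int.const_mul _)
  have key := integral_Ioi_of_hasDerivAt_of_tendsto' hderiv f'int htend
  rw [MeasureTheory.integral_add (h0int.const_mul _) (h2int.const_mul _),
    MeasureTheory.integral_const_mul, MeasureTheory.integral_const_mul] at key
  have hf0 : f 0 = 1 := by simp [hf]
  rw [hf0] at key
  simpa using key

lemma airy_ode (y : ℝ) : iteratedDeriv 2 AiryA y = (y:ℂ) * AiryA y := by
  rw [iter_eq 2]
  have h1 := ray_identity e1 e1_cube e1_im e1_norm y
  have h5 := ray_identity e5 e5_cube e5_im e5_norm y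
  simp only [Gf, CInt12, AiryA]
  have hπ : (Real.pi:ℂ) ≠ 0 := by exact_mod_cast Real.pi_ne_zero
  have hI : (8*Complex.I : ℂ) ≠ 0 := by simp [Complex.I_ne_zero]
  have h2 : (8*Complex.I) *
      ((∫ r in Ioi (0:ℝ), ((r:ℂ)*e1)^2 *
        Complex.exp (2*Complex.I*((y:ℂ)*((r:ℂ)*e1)+4*((r:ℂ)*e1)^3/3))) * e1
      - (∫ r in Ioi (0:ℝ), ((r:ℂ)*e5)^2 *
        Complex.exp (2*Complex.I*((y:ℂ)*((r:ℂ)*e5)+4*((r:ℂ)*e5)^3/3))) * e5)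
      = (8*Complex.I) * (-((y:ℂ)/4) *
      ((∫ r in Ioi (0:ℝ),
        Complex.exp (2*Complex.I*((y:ℂ)*((r:ℂ)*e1)+4*((r:ℂ)*e1)^3/3))) * e1
      - (∫ r in Ioi (0:ℝ),
        Complex.exp (2*Complex.I*((y:ℂ)*((r:ℂ)*e5)+4*((r:ℂ)*e5)^3/3))) * e5)) := by
    linear_combination h1 - h5
  have hA := mul_left_cancel₀ hI h2
  rw [hA]
  have h4 : (2*Complex.I)^2 = -4 := by rw [mul_pow, Complex.I_sq]; norm_num
  rw [h4]
  field_simp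
  ring


/-- Airy-type contour integral: convergence, reality, smoothness with derivative
formulas, and the Airy equation. -/
theorem airy_contour_integral :
    -- (i) absolute convergence of the defining integrals
    (∀ y : ℝ,
      IntegrableOn
        (fun r : ℝ => Complex.exp (2 * Complex.I * (y * (r * e1) + 4 * (r * e1) ^ 3 / 3)))
        (Ioi 0) ∧
      IntegrableOn
        (fun r : ℝ => Complex.exp (2 * Complex.I * (y * (r * e5) + 4 * (r * e5) ^ 3 / 3)))
        (Ioi 0)) ∧
    -- (ii) A is real-valued
    (∀ y : ℝ, (AiryA y).im = 0) ∧
    -- (iii) A is smooth and its derivatives are given by contour integrals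
    (∀ n : ℕ, ContDiff ℝ n AiryA) ∧
    (∀ j : ℕ, ∀ y : ℝ,
      (IntegrableOn
        (fun r : ℝ => (r * e1) ^ j *
          Complex.exp (2 * Complex.I * (y * (r * e1) + 4 * (r * e1) ^ 3 / 3))) (Ioi 0) ∧
       IntegrableOn
        (fun r : ℝ => (r * e5) ^ j *
          Complex.exp (2 * Complex.I * (y * (r * e5) + 4 * (r * e5) ^ 3 / 3))) (Ioi 0)) ∧
      iteratedDeriv j AiryA y =
        ((2 * Complex.I) ^ j / (Real.pi : ℂ)) *
          CInt12 (fun z => z ^ j * Complex.exp (2 * Complex.I * (y * z + 4 * z ^ 3 / 3)))) ∧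
    -- (iv) the Airy equation
    (∀ y : ℝ, iteratedDeriv 2 AiryA y = (y : ℂ) * AiryA y) := by
  refine ⟨?_, ?_, ?_, ?_, ?_⟩
  · intro y
    constructor
    · simpa using key_integrable e1 e1_cube e1_im e1_norm 0 y
    · simpa using key_integrable e5 e5_cube e5_im e5_norm 0 y
  · exact airy_real
  · exact airy_smooth
  · intro j y
    refine ⟨⟨key_integrable e1 e1_cube e1_im e1_norm j y,
      key_integrable e5 e5_cube e5_im e5_norm j y⟩, ?_⟩
    rw [iter_eq j]
    rfl
  · exact airy_ode
end
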